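/- arXiv:1912.00593 — 3 statements merged into one kernel-verified Lean document; each statement's English description precedes it below -/
import Mathlib

section
/- Let v ∈ ℂ^n, u ∈ ℤ^n, and b ∈ ℂ^n with b_j ≠ 0 for every j. Then the polynomial [v+u+sb]_{u₊} ∈ ℂ[s] is nonzero and ord_s([v+u+sb]_{u₊}) = |nsupp(v) \ nsupp(v+u)|. (Corollary 5.2 (2).) -/
open scoped Classical

/-- The negative support of `v`: indices where `v i` is a negative integer. -/
noncomputable def nsupp {n : ℕ} (v : Fin n → ℂ) : Finset (Fin n) :=
  Finset.univ.filter (fun i => ∃ m : ℤ, m < 0 ∧ v i = (m : ℂ))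

/-- The falling factorial `[v]_u = ∏_i ∏_{k=0}^{u_i - 1} (v_i - k)`. -/
noncomputable def ffall {n : ℕ} (v : Fin n → ℂ) (u : Fin n → ℕ) : ℂ :=
  ∏ i, ∏ k ∈ Finset.range (u i), (v i - (k : ℂ))

/-- The reduced falling factorial: the product of the nonzero factors of `[v]_u`. -/
noncomputable def redffall {n : ℕ} (v : Fin n → ℂ) (u : Fin n → ℕ) : ℂ :=
  ∏ i, ∏ k ∈ (Finset.range (u i)).filter (fun k : ℕ => v i - (k : ℂ) ≠ 0), (v i - (k : ℂ))

/-- The polynomial `[v + s b]_u = ∏_i ∏_{k=0}^{u_i - 1} (v_i - k + s b_i)` in `ℂ[s]`. -/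
noncomputable def pertFF {n : ℕ} (v b : Fin n → ℂ) (u : Fin n → ℕ) : Polynomial ℂ :=
  ∏ i, ∏ k ∈ Finset.range (u i),
    (Polynomial.C (v i - (k : ℂ)) + Polynomial.C (b i) * Polynomial.X)

open Polynomial



lemma factor_ne_zero {a b : ℂ} (hb : b ≠ 0) : (C a + C b * X : ℂ[X]) ≠ 0 := by
  intro h
  have := congrArg (fun p => Polynomial.coeff p 1) h
  simp at this
  exact hb this

lemma factor_ntd {a b : ℂ} (hb : b ≠ 0) :
    (C a + C b * X : ℂ[X]).natTrailingDegree = if a = 0 then 1 else 0 := by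
  split_ifs with h
  · have : (C a + C b * X : ℂ[X]) = C b * X := by simp [h]
    rw [this, Polynomial.natTrailingDegree_mul (by simpa using hb) Polynomial.X_ne_zero,
      Polynomial.natTrailingDegree_C, Polynomial.natTrailingDegree_X]
  · apply Polynomial.natTrailingDegree_eq_zero_of_constantCoeff_ne_zero ?_
    simp [h]

lemma ntd_prod {ι : Type*} (s : Finset ι) (f : ι → ℂ[X]) (hf : ∀ i ∈ s, f i ≠ 0) :
    (∏ i ∈ s, f i).natTrailingDegree = ∑ i ∈ s, (f i).natTrailingDegree := by
  classical
  induction s using Finset.induction with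
  | empty => simp
  | @insert a s h ih =>
    rw [Finset.prod_insert h, Finset.sum_insert h,
      Polynomial.natTrailingDegree_mul (hf a (Finset.mem_insert_self a s))
        (Finset.prod_ne_zero_iff.2 fun i hi => hf i (Finset.mem_insert_of_mem hi)),
      ih (fun i hi => hf i (Finset.mem_insert_of_mem hi))]

lemma key (vi : ℂ) (ui : ℤ) :
    ((Finset.range ui.toNat).filter (fun k : ℕ => vi + (ui : ℂ) - (k : ℂ) = 0)).card
      = if (∃ m : ℤ, m < 0 ∧ vi = (m : ℂ)) ∧ ¬(∃ m : ℤ, m < 0 ∧ vi + (ui : ℂ) = (m : ℂ))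
        then 1 else 0 := by
  split_ifs with h
  · obtain ⟨⟨m, hm, hvm⟩, h2⟩ := h
    have hge : 0 ≤ m + ui := by
      by_contra hlt
      exact h2 ⟨m + ui, by omega, by rw [hvm]; push_cast; ring⟩
    have hiff : ∀ k : ℕ, vi + (ui : ℂ) - (k : ℂ) = 0 ↔ m + ui = (k : ℤ) := by
      intro k
      constructor
      · intro hk
        have : ((m + ui - (k : ℤ) : ℤ) : ℂ) = 0 := by
          push_cast
          rw [← hvm]; linear_combination hk
        have := Int.cast_injective (α := ℂ) (by simpa using this : ((m + ui - k : ℤ) : ℂ) = ((0:ℤ):ℂ))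
        omega
      · intro hk
        rw [hvm]
        have : ((k:ℤ):ℂ) = ((m + ui : ℤ):ℂ) := by rw [← hk]
        push_cast at this ⊢
        linear_combination -this
    have : ((Finset.range ui.toNat).filter (fun k : ℕ => vi + (ui : ℂ) - (k : ℂ) = 0))
        = {(m + ui).toNat} := by
      ext k
      simp only [Finset.mem_filter, Finset.mem_range, hiff, Finset.mem_singleton]
      omega
    rw [this]; rfl
  · rw [Finset.card_eq_zero.2, ]
    rw [Finset.filter_eq_empty_iff]
    intro k hk hzero
    rw [Finset.mem_range] at hk
    apply h
    have hvi : vi = ((k - ui : ℤ) : ℂ) := by push_cast; linear_combination hzero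
    refine ⟨⟨(k:ℤ) - ui, by omega, hvi⟩, ?_⟩
    rintro ⟨m, hm, hvum⟩
    have : ((k:ℤ):ℂ) = ((m:ℤ):ℂ) := by
      push_cast
      rw [← hvum]; linear_combination -hzero
    have := Int.cast_injective (α := ℂ) this
    omega

/-- Corollary 5.2 (2): if `b_j ≠ 0` for all `j`, then `[v+u+sb]_{u₊}` is a
nonzero polynomial with `ord_s([v+u+sb]_{u₊}) = |nsupp(v) \ nsupp(v+u)|`. -/
theorem ord_pertFF_posPart {n : ℕ} (hn : 0 < n) (v b : Fin n → ℂ) (u : Fin n → ℤ)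
    (hb : ∀ j, b j ≠ 0) :
    pertFF (fun i => v i + ((u i : ℤ) : ℂ)) b (fun i => (u i).toNat) ≠ 0 ∧
    (pertFF (fun i => v i + ((u i : ℤ) : ℂ)) b (fun i => (u i).toNat)).natTrailingDegree =
      (nsupp v \ nsupp (fun i => v i + ((u i : ℤ) : ℂ))).card := by
  classical
  constructor
  · exact Finset.prod_ne_zero_iff.2 fun i _ =>
      Finset.prod_ne_zero_iff.2 fun k _ => factor_ne_zero (hb i)
  · rw [pertFF, ntd_prod _ _ (fun i _ =>
      Finset.prod_ne_zero_iff.2 fun k _ => factor_ne_zero (hb i))]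
    have step : ∀ i : Fin n,
        (∏ k ∈ Finset.range ((u i).toNat),
          (Polynomial.C ((fun i => v i + ((u i : ℤ) : ℂ)) i - (k : ℂ)) +
            Polynomial.C (b i) * Polynomial.X)).natTrailingDegree =
        if (∃ m : ℤ, m < 0 ∧ v i = (m : ℂ)) ∧
            ¬(∃ m : ℤ, m < 0 ∧ v i + ((u i : ℤ) : ℂ) = (m : ℂ)) then 1 else 0 := by
      intro i
      rw [ntd_prod _ _ (fun k _ => factor_ne_zero (hb i))]
      have : ∀ k ∈ Finset.range ((u i).toNat),
          (Polynomial.C ((fun i => v i + ((u i : ℤ) : ℂ)) i - (k : ℂ)) +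
            Polynomial.C (b i) * Polynomial.X).natTrailingDegree =
          if v i + ((u i : ℤ) : ℂ) - (k : ℂ) = 0 then 1 else 0 := fun k _ =>
        factor_ntd (hb i)
      rw [Finset.sum_congr rfl this, Finset.sum_boole]
      simpa using key (v i) (u i)
    rw [Finset.sum_congr rfl (fun i _ => step i)]
    have hmem : ∀ i : Fin n,
        ((∃ m : ℤ, m < 0 ∧ v i = (m : ℂ)) ∧
          ¬(∃ m : ℤ, m < 0 ∧ v i + ((u i : ℤ) : ℂ) = (m : ℂ))) ↔
        i ∈ nsupp v \ nsupp (fun i => v i + ((u i : ℤ) : ℂ)) := by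
      intro i
      simp [nsupp, Finset.mem_sdiff]
    calc (∑ i : Fin n, if (∃ m : ℤ, m < 0 ∧ v i = (m : ℂ)) ∧
            ¬(∃ m : ℤ, m < 0 ∧ v i + ((u i : ℤ) : ℂ) = (m : ℂ)) then 1 else 0)
        = ∑ i : Fin n, if i ∈ nsupp v \ nsupp (fun i => v i + ((u i : ℤ) : ℂ)) then 1 else 0 :=
          Finset.sum_congr rfl fun i _ => if_congr (hmem i) rfl rfl
      _ = (nsupp v \ nsupp (fun i => v i + ((u i : ℤ) : ℂ))).card := by
          rw [Finset.sum_ite_mem, Finset.univ_inter, Finset.card_eq_sum_ones]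
end

section
/- Let v, b ∈ ℂ^n with b_j ≠ 0 for every j, and let u, u' ∈ ℤ^n. Set I₀ = nsupp(v), I = nsupp(v+u), and J = nsupp(v+u−u'). Then the ratio of trailing coefficients satisfies tc([v+sb]_{u₋} · [v+u+sb]_{u'₊}) / tc([v+u+sb]_{u₊}) = (b_{I\I₀} · b_{J\I} / b_{I₀\I}) · ([v]^_{u₋} · [v+u]^_{u'₊} / [v+u]^_{u₊}), where b_K := ∏_{k∈K} b_k for a finite index set K. In particular the leading coefficient of the critical term in equation (12) of Theorem 5.4 equals b_{I\I₀} b_{J\I} / b_{I₀\I} times a nonzero constant that does not depend on b. -/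
open scoped Classical

/-- Indices where some factor of `[v]_u` vanishes. -/
noncomputable def zset {n : ℕ} (v : Fin n → ℂ) (u : Fin n → ℕ) : Finset (Fin n) :=
  Finset.univ.filter (fun i => ∃ k ∈ Finset.range (u i), v i = (k : ℂ))

lemma trailingCoeff_prod' {ι : Type*} (s : Finset ι) (f : ι → Polynomial ℂ) :
    (∏ i ∈ s, f i).trailingCoeff = ∏ i ∈ s, (f i).trailingCoeff := by
  induction s using Finset.cons_induction with
  | empty => simp [Polynomial.trailingCoeff]
  | cons a s ha ih => rw [Finset.prod_cons, Finset.prod_cons, Polynomial.trailingCoeff_mul, ih]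

lemma tc_factor (a b : ℂ) :
    (Polynomial.C a + Polynomial.C b * Polynomial.X).trailingCoeff = if a = 0 then b else a := by
  split_ifs with h
  · subst h
    simp only [Polynomial.C_0, zero_add, Polynomial.trailingCoeff_mul]
    simp [Polynomial.trailingCoeff]
  · have h0 : (Polynomial.C a + Polynomial.C b * Polynomial.X).coeff 0 = a := by simp
    have : (Polynomial.C a + Polynomial.C b * Polynomial.X).natTrailingDegree = 0 := by
      rw [Polynomial.natTrailingDegree_eq_zero]; right; rw [h0]; exact h
    rw [Polynomial.trailingCoeff, this, h0]

lemma tc_pertFF {n : ℕ} (v b : Fin n → ℂ) (u : Fin n → ℕ) :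
    (pertFF v b u).trailingCoeff = (∏ i ∈ zset v u, b i) * redffall v u := by
  rw [pertFF, trailingCoeff_prod']
  have hinner : ∀ i : Fin n,
      (∏ k ∈ Finset.range (u i),
        (Polynomial.C (v i - (k : ℂ)) + Polynomial.C (b i) * Polynomial.X)).trailingCoeff
      = (if ∃ k ∈ Finset.range (u i), v i = (k : ℂ) then b i else 1) *
        ∏ k ∈ (Finset.range (u i)).filter (fun k : ℕ => v i - (k : ℂ) ≠ 0), (v i - (k : ℂ)) := by
    intro i
    rw [trailingCoeff_prod']
    have : ∀ k ∈ Finset.range (u i),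
        (Polynomial.C (v i - (k : ℂ)) + Polynomial.C (b i) * Polynomial.X).trailingCoeff
        = if v i - (k : ℂ) = 0 then b i else v i - (k : ℂ) := fun k _ => tc_factor _ _
    rw [Finset.prod_congr rfl this, Finset.prod_ite]
    congr 1
    rw [Finset.prod_const]
    by_cases h : ∃ k ∈ Finset.range (u i), v i = (k : ℂ)
    · rw [if_pos h]
      obtain ⟨k₀, hk₀, hv⟩ := h
      have hset : (Finset.range (u i)).filter (fun k : ℕ => v i - (k : ℂ) = 0) = {k₀} := by
        ext k
        simp only [Finset.mem_filter, Finset.mem_singleton, sub_eq_zero]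
        constructor
        · rintro ⟨-, hk⟩
          have : (k : ℂ) = (k₀ : ℂ) := by rw [← hk, hv]
          exact_mod_cast this
        · rintro rfl; exact ⟨hk₀, hv⟩
      rw [hset, Finset.card_singleton, pow_one]
    · have hset : (Finset.range (u i)).filter (fun k : ℕ => v i - (k : ℂ) = 0) = ∅ := by
        ext k
        simp only [Finset.mem_filter, Finset.notMem_empty, iff_false, not_and, sub_eq_zero]
        intro hk hv
        exact h ⟨k, hk, hv⟩
      rw [if_neg h, hset, Finset.card_empty, pow_zero]
  rw [Finset.prod_congr rfl fun i _ => hinner i, Finset.prod_mul_distrib, redffall]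
  congr 1
  rw [zset, ← Finset.prod_filter]

/-- leading coefficient of the critical term in equation (12) of
Theorem 5.4: with `I₀ = nsupp(v)`, `I = nsupp(v+u)`, `J = nsupp(v+u−u')`,
`tc([v+sb]_{u₋}·[v+u+sb]_{u'₊}) / tc([v+u+sb]_{u₊})
  = (b_{I\I₀}·b_{J\I}/b_{I₀\I}) · ([v]^_{u₋}·[v+u]^_{u'₊}/[v+u]^_{u₊})`. -/
theorem trailingCoeff_critical_term {n : ℕ} (hn : 0 < n) (v b : Fin n → ℂ) (u u' : Fin n → ℤ)
    (hb : ∀ j, b j ≠ 0)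
    (I₀ I J : Finset (Fin n)) (hI₀ : I₀ = nsupp v)
    (hI : I = nsupp (fun i => v i + ((u i : ℤ) : ℂ)))
    (hJ : J = nsupp (fun i => v i + ((u i - u' i : ℤ) : ℂ))) :
    (pertFF v b (fun i => (-(u i)).toNat) *
        pertFF (fun i => v i + ((u i : ℤ) : ℂ)) b (fun i => (u' i).toNat)).trailingCoeff /
      (pertFF (fun i => v i + ((u i : ℤ) : ℂ)) b (fun i => (u i).toNat)).trailingCoeff
    = ((∏ i ∈ I \ I₀, b i) * (∏ i ∈ J \ I, b i) / (∏ i ∈ I₀ \ I, b i)) *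
        (redffall v (fun i => (-(u i)).toNat) *
            redffall (fun i => v i + ((u i : ℤ) : ℂ)) (fun i => (u' i).toNat) /
          redffall (fun i => v i + ((u i : ℤ) : ℂ)) (fun i => (u i).toNat)) := by
  have key1 : zset v (fun i => (-(u i)).toNat) = I \ I₀ := by
    subst hI hI₀
    ext i
    simp only [zset, nsupp, Finset.mem_filter, Finset.mem_sdiff, Finset.mem_univ, true_and,
      Finset.mem_range]
    constructor
    · rintro ⟨k, hk, hv⟩
      have hki : (k : ℤ) < -(u i) := by omega
      refine ⟨⟨(k : ℤ) + u i, by omega, ?_⟩, ?_⟩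
      · rw [hv]; push_cast; ring
      · rintro ⟨m, hm, hvm⟩
        have : (k : ℤ) = m := by
          have : ((k : ℤ) : ℂ) = (m : ℂ) := by push_cast; rw [← hv, hvm]
          exact_mod_cast this
        omega
    · rintro ⟨⟨m, hm, hvm⟩, hni⟩
      have hnn : ¬ (m - u i < 0) := by
        intro hneg
        exact hni ⟨m - u i, hneg, by push_cast; push_cast at hvm; linear_combination hvm⟩
      refine ⟨(m - u i).toNat, by omega, ?_⟩
      have : (((m - u i).toNat : ℤ) : ℂ) = ((m - u i : ℤ) : ℂ) := by
        norm_cast; omega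
      push_cast at this hvm ⊢
      rw [this]
      push_cast
      linear_combination hvm
  have key2 : zset (fun i => v i + ((u i : ℤ) : ℂ)) (fun i => (u' i).toNat) = J \ I := by
    subst hI hJ
    ext i
    simp only [zset, nsupp, Finset.mem_filter, Finset.mem_sdiff, Finset.mem_univ, true_and,
      Finset.mem_range]
    constructor
    · rintro ⟨k, hk, hv⟩
      have hki : (k : ℤ) < u' i := by omega
      refine ⟨⟨(k : ℤ) - u' i, by omega, ?_⟩, ?_⟩
      · push_cast at hv ⊢; linear_combination hv
      · rintro ⟨m, hm, hvm⟩
        have : (k : ℤ) = m := by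
          have : ((k : ℤ) : ℂ) = (m : ℂ) := by push_cast at hv hvm ⊢; linear_combination hvm - hv
          exact_mod_cast this
        omega
    · rintro ⟨⟨m, hm, hvm⟩, hni⟩
      have hnn : ¬ (m + u' i < 0) := by
        intro hneg
        refine hni ⟨m + u' i, hneg, ?_⟩
        push_cast at hvm ⊢; linear_combination hvm
      refine ⟨(m + u' i).toNat, by omega, ?_⟩
      have : (((m + u' i).toNat : ℤ) : ℂ) = ((m + u' i : ℤ) : ℂ) := by norm_cast; omega
      push_cast at this hvm ⊢
      rw [this]
      linear_combination hvm
  have key3 : zset (fun i => v i + ((u i : ℤ) : ℂ)) (fun i => (u i).toNat) = I₀ \ I := by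
    subst hI hI₀
    ext i
    simp only [zset, nsupp, Finset.mem_filter, Finset.mem_sdiff, Finset.mem_univ, true_and,
      Finset.mem_range]
    constructor
    · rintro ⟨k, hk, hv⟩
      have hki : (k : ℤ) < u i := by omega
      refine ⟨⟨(k : ℤ) - u i, by omega, ?_⟩, ?_⟩
      · push_cast at hv ⊢; linear_combination hv
      · rintro ⟨m, hm, hvm⟩
        have : (k : ℤ) = m := by
          have : ((k : ℤ) : ℂ) = (m : ℂ) := by push_cast at hv hvm ⊢; linear_combination hvm - hv
          exact_mod_cast this
        omega
    · rintro ⟨⟨m, hm, hvm⟩, hni⟩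
      have hnn : ¬ (m + u i < 0) := by
        intro hneg
        refine hni ⟨m + u i, hneg, ?_⟩
        push_cast at hvm ⊢; linear_combination hvm
      refine ⟨(m + u i).toNat, by omega, ?_⟩
      have : (((m + u i).toNat : ℤ) : ℂ) = ((m + u i : ℤ) : ℂ) := by norm_cast; omega
      push_cast at this hvm ⊢
      rw [this]
      linear_combination hvm
  rw [Polynomial.trailingCoeff_mul, tc_pertFF, tc_pertFF, tc_pertFF, key1, key2, key3]
  ring
end

section
/- Let v ∈ ℂ^n, let b^{(1)}, …, b^{(l)} ∈ ℂ^n, and let u ∈ ℤ^n. Set I₀ = nsupp(v), I = nsupp(v+u), ℓ_i = Σ_{j=1}^l b_i^{(j)} s_j, and define Q₋ = ∏_{i=1}^n ∏_{k=0}^{(u₋)_i−1} (v_i − k + ℓ_i) and Q₊ = ∏_{i=1}^n ∏_{k=0}^{(u₊)_i−1} (v_i + u_i − k + ℓ_i) in ℂ[s₁,…,s_l]. Then: every homogeneous component of Q₋ of total degree < |I\I₀| is zero and its component of degree |I\I₀| equals [v]^_{u₋} · ∏_{i∈I\I₀} ℓ_i; and every homogeneous component of Q₊ of total degree < |I₀\I|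 is zero and its component of degree |I₀\I| equals [v+u]^_{u₊} · ∏_{i∈I₀\I} ℓ_i. (Lemma 6.1 (1): the lowest-degree parts of the numerator and denominator of a_u(s) = [v+sb]_{u₋}/[v+sb+u]_{u₊} with s·b = s₁b^{(1)}+⋯+s_l b^{(l)}.) -/
open scoped Classical

/-- The linear form `ℓ_i = Σ_j b_i^{(j)} s_j` in `ℂ[s₁,…,s_l]`. -/
noncomputable def ell {n l : ℕ} (b : Fin l → Fin n → ℂ) (i : Fin n) :
    MvPolynomial (Fin l) ℂ :=
  ∑ j, MvPolynomial.C (b j i) * MvPolynomial.X j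

/-- The multivariate perturbed falling factorial
`∏_i ∏_{k=0}^{u_i−1} (v_i − k + ℓ_i)` in `ℂ[s₁,…,s_l]`. -/
noncomputable def pertFFmv {n l : ℕ} (v : Fin n → ℂ) (b : Fin l → Fin n → ℂ)
    (u : Fin n → ℕ) : MvPolynomial (Fin l) ℂ :=
  ∏ i, ∏ k ∈ Finset.range (u i), (MvPolynomial.C (v i - (k : ℂ)) + ell b i)

lemma ell_isHomogeneous {n l : ℕ} (b : Fin l → Fin n → ℂ) (i : Fin n) :
    (ell b i).IsHomogeneous 1 :=
  MvPolynomial.IsHomogeneous.sum _ _ _ fun j _ => MvPolynomial.isHomogeneous_C_mul_X _ _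

lemma constantCoeff_ell {n l : ℕ} (b : Fin l → Fin n → ℂ) (i : Fin n) :
    MvPolynomial.constantCoeff (ell b i) = 0 := by
  simp [ell]

lemma hc_mul_left {l : ℕ} {H : MvPolynomial (Fin l) ℂ} {d : ℕ}
    (hH : H.IsHomogeneous d) (Q : MvPolynomial (Fin l) ℂ) (m : ℕ) :
    MvPolynomial.homogeneousComponent m (H * Q) =
      if d ≤ m then H * MvPolynomial.homogeneousComponent (m - d) Q else 0 := by
  conv_lhs => rw [← Q.sum_homogeneousComponent]
  rw [Finset.mul_sum, map_sum]
  have key : ∀ k, MvPolynomial.homogeneousComponent m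
      (H * MvPolynomial.homogeneousComponent k Q)
      = if m = d + k then H * MvPolynomial.homogeneousComponent k Q else 0 := fun k =>
    MvPolynomial.homogeneousComponent_of_mem
      ((MvPolynomial.mem_homogeneousSubmodule _ _).mpr
        (hH.mul (MvPolynomial.homogeneousComponent_isHomogeneous k Q)))
  simp only [key]
  by_cases hdm : d ≤ m
  · have hcond : ∀ k : ℕ, (m = d + k) ↔ (k = m - d) := fun k => by omega
    simp only [hcond]
    rw [Finset.sum_ite_eq' (Finset.range (Q.totalDegree + 1))]
    rw [if_pos hdm]
    split_ifs with h
    · rfl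
    · rw [MvPolynomial.homogeneousComponent_eq_zero, mul_zero]
      simp only [Finset.mem_range, not_lt] at h
      omega
  · rw [if_neg hdm]
    apply Finset.sum_eq_zero
    intro k _
    rw [if_neg (by omega)]

lemma main_lemma {n l : ℕ} (v : Fin n → ℂ) (b : Fin l → Fin n → ℂ) (w : Fin n → ℕ)
    (J : Finset (Fin n))
    (hJ : ∀ i, ((Finset.range (w i)).filter (fun k : ℕ => v i - (k : ℂ) = 0)).card
      = if i ∈ J then 1 else 0) :
    (∀ m < J.card, MvPolynomial.homogeneousComponent m (pertFFmv v b w) = 0) ∧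
      MvPolynomial.homogeneousComponent J.card (pertFFmv v b w) =
        MvPolynomial.C (redffall v w) * ∏ i ∈ J, ell b i := by
  set H := ∏ i ∈ J, ell b i with hHdef
  set Q := ∏ i, ∏ k ∈ (Finset.range (w i)).filter (fun k : ℕ => v i - (k : ℂ) ≠ 0),
    (MvPolynomial.C (v i - (k : ℂ)) + ell b i) with hQdef
  have hH : H.IsHomogeneous J.card := by
    have := MvPolynomial.IsHomogeneous.prod J (fun i => ell b i) (fun _ => 1)
      (fun i _ => ell_isHomogeneous b i)
    simpa using this
  have hsplit : pertFFmv v b w = H * Q := by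
    have inner : ∀ i : Fin n,
        ∏ k ∈ Finset.range (w i), (MvPolynomial.C (v i - (k : ℂ)) + ell b i)
        = (if i ∈ J then ell b i else 1) *
          ∏ k ∈ (Finset.range (w i)).filter (fun k : ℕ => v i - (k : ℂ) ≠ 0),
            (MvPolynomial.C (v i - (k : ℂ)) + ell b i) := by
      intro i
      rw [← Finset.prod_filter_mul_prod_filter_not (Finset.range (w i))
        (fun k : ℕ => v i - (k : ℂ) = 0)]
      congr 1
      have : ∀ k ∈ (Finset.range (w i)).filter (fun k : ℕ => v i - (k : ℂ) = 0),
          (MvPolynomial.C (v i - (k : ℂ)) + ell b i) = ell b i := by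
        intro k hk
        rw [(Finset.mem_filter.mp hk).2, map_zero, zero_add]
      rw [Finset.prod_congr rfl this, Finset.prod_const, hJ i]
      split_ifs <;> simp
    rw [pertFFmv]
    rw [Finset.prod_congr rfl (fun i _ => inner i), Finset.prod_mul_distrib,
      Finset.prod_ite_mem, Finset.univ_inter, hQdef]
  have hcc : MvPolynomial.constantCoeff Q = redffall v w := by
    rw [hQdef, redffall]
    rw [map_prod]
    apply Finset.prod_congr rfl
    intro i _
    rw [map_prod]
    apply Finset.prod_congr rfl
    intro k _
    rw [map_add, MvPolynomial.constantCoeff_C, constantCoeff_ell, add_zero]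
  constructor
  · intro m hm
    rw [hsplit, hc_mul_left hH, if_neg (not_le.mpr hm)]
  · rw [hsplit, hc_mul_left hH, if_pos le_rfl, Nat.sub_self,
      MvPolynomial.homogeneousComponent_zero]
    have : MvPolynomial.coeff 0 Q = redffall v w := hcc
    rw [this, mul_comm]

lemma card_aux (x : ℂ) (N : ℕ) :
    ((Finset.range N).filter (fun k : ℕ => x - (k : ℂ) = 0)).card =
      if ∃ k : ℕ, k < N ∧ x = (k : ℂ) then 1 else 0 := by
  split_ifs with h
  · obtain ⟨k, hk, hx⟩ := h
    have hset : (Finset.range N).filter (fun k : ℕ => x - (k : ℂ) = 0) = {k} := by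
      ext a
      simp only [Finset.mem_filter, Finset.mem_range, Finset.mem_singleton, sub_eq_zero]
      constructor
      · rintro ⟨ha, hxa⟩
        have : (a : ℂ) = (k : ℂ) := by rw [← hxa, hx]
        exact_mod_cast this
      · rintro rfl
        exact ⟨hk, hx⟩
    rw [hset, Finset.card_singleton]
  · rw [Finset.card_eq_zero, Finset.filter_eq_empty_iff]
    intro a ha
    rw [sub_eq_zero]
    exact fun hxa => h ⟨a, Finset.mem_range.mp ha, hxa⟩

/-- Lemma 6.1 (1): with `I₀ = nsupp(v)`, `I = nsupp(v+u)`,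
the lowest-degree parts of `Q₋ = [v+sb]_{u₋}` and `Q₊ = [v+sb+u]_{u₊}` (with
`s·b = s₁b^{(1)}+⋯+s_l b^{(l)}`) are `[v]^_{u₋}·∏_{i∈I\I₀} ℓ_i` in degree `|I\I₀|`
and `[v+u]^_{u₊}·∏_{i∈I₀\I} ℓ_i` in degree `|I₀\I|`, respectively. -/
theorem pertFFmv_num_den_lowest_components {n l : ℕ} (hn : 0 < n) (hl : 0 < l)
    (v : Fin n → ℂ) (b : Fin l → Fin n → ℂ) (u : Fin n → ℤ)
    (I₀ I : Finset (Fin n)) (hI₀ : I₀ = nsupp v)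
    (hI : I = nsupp (fun i => v i + ((u i : ℤ) : ℂ))) :
    ((∀ m < (I \ I₀).card,
        MvPolynomial.homogeneousComponent m (pertFFmv v b (fun i => (-(u i)).toNat)) = 0) ∧
      MvPolynomial.homogeneousComponent (I \ I₀).card
          (pertFFmv v b (fun i => (-(u i)).toNat)) =
        MvPolynomial.C (redffall v (fun i => (-(u i)).toNat)) * ∏ i ∈ I \ I₀, ell b i) ∧
    ((∀ m < (I₀ \ I).card,
        MvPolynomial.homogeneousComponent m
          (pertFFmv (fun i => v i + ((u i : ℤ) : ℂ)) b (fun i => (u i).toNat)) = 0) ∧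
      MvPolynomial.homogeneousComponent (I₀ \ I).card
          (pertFFmv (fun i => v i + ((u i : ℤ) : ℂ)) b (fun i => (u i).toNat)) =
        MvPolynomial.C
            (redffall (fun i => v i + ((u i : ℤ) : ℂ)) (fun i => (u i).toNat)) *
          ∏ i ∈ I₀ \ I, ell b i) := by
  constructor
  · apply main_lemma
    intro i
    rw [card_aux]
    have hiff : (∃ k : ℕ, k < (-(u i)).toNat ∧ v i = (k : ℂ)) ↔ i ∈ I \ I₀ := by
      rw [hI, hI₀, Finset.mem_sdiff]
      simp only [nsupp, Finset.mem_filter, Finset.mem_univ, true_and]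
      constructor
      · rintro ⟨k, hk, hvk⟩
        refine ⟨⟨(k : ℤ) + u i, by omega, ?_⟩, ?_⟩
        · rw [hvk]; push_cast; ring
        · rintro ⟨m, hm, hvm⟩
          rw [hvk] at hvm
          have : (k : ℤ) = m := by exact_mod_cast hvm
          omega
      · rintro ⟨⟨m, hm, hvm⟩, hnot⟩
        have hv : v i = ((m - u i : ℤ) : ℂ) := by push_cast; linear_combination hvm
        have hge : 0 ≤ m - u i := by
          by_contra hlt
          exact hnot ⟨m - u i, by omega, hv⟩
        refine ⟨(m - u i).toNat, by omega, ?_⟩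
        rw [hv]
        norm_cast
        omega
    simp only [hiff]
  · apply main_lemma
    intro i
    rw [card_aux]
    have hiff : (∃ k : ℕ, k < (u i).toNat ∧ v i + ((u i : ℤ) : ℂ) = (k : ℂ)) ↔ i ∈ I₀ \ I := by
      rw [hI, hI₀, Finset.mem_sdiff]
      simp only [nsupp, Finset.mem_filter, Finset.mem_univ, true_and]
      constructor
      · rintro ⟨k, hk, hvk⟩
        have hv : v i = ((k - u i : ℤ) : ℂ) := by push_cast; linear_combination hvk
        refine ⟨⟨(k : ℤ) - u i, by omega, by exact_mod_cast hv⟩, ?_⟩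
        rintro ⟨m, hm, hvm⟩
        rw [hvk] at hvm
        have : (k : ℤ) = m := by exact_mod_cast hvm
        omega
      · rintro ⟨⟨m, hm, hvm⟩, hnot⟩
        have hv : v i + ((u i : ℤ) : ℂ) = ((m + u i : ℤ) : ℂ) := by
          push_cast; linear_combination hvm
        have hge : 0 ≤ m + u i := by
          by_contra hlt
          exact hnot ⟨m + u i, by omega, hv⟩
        refine ⟨(m + u i).toNat, by omega, ?_⟩
        rw [hv]
        norm_cast
        omega
    simp only [hiff]
end
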